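/- Let α > 0 and β₁, β₂ > 1 be real numbers. If β₁ < β₂, then the function z ↦ E_{α,β₁}(z) / E_{α,β₂}(z) is increasing on (0,∞); if β₂ < β₁, then this function is decreasing on (0,∞). -/
import Mathlib

open Real Filter

/-- The Mittag-Leffler function `E_{α,β}(z) = ∑_{n=0}^∞ z^n / Γ(α n + β)`. -/
noncomputable def mittagLeffler (α β z : ℝ) : ℝ :=
  ∑' n : ℕ, z ^ n / Real.Gamma (α * n + β)

/-- Four-point log-convexity inequality for Gamma. -/
private lemma gamma_four_point {s t δ : ℝ} (hs : 0 < s) (hst : s ≤ t) (hδ : 0 ≤ δ) :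
    Real.Gamma (s + δ) * Real.Gamma t ≤ Real.Gamma s * Real.Gamma (t + δ) := by
  have ht : 0 < t := hs.trans_le hst
  rcases eq_or_lt_of_le hδ with rfl | hδ
  · simp [mul_comm]
  rcases eq_or_lt_of_le hst with rfl | hst
  · rw [mul_comm]
  set L : ℝ → ℝ := Real.log ∘ Real.Gamma with hL
  have hconv := Real.convexOn_log_Gamma
  have hmem : ∀ u : ℝ, 0 < u → u ∈ Set.Ioi (0:ℝ) := fun u hu => hu
  have h1 : (L (s + δ) - L s) / (s + δ - s) ≤ (L (t + δ) - L s) / (t + δ - s) :=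
    hconv.secant_mono (hmem s hs) (hmem _ (by linarith)) (hmem _ (by linarith))
      (by intro h; linarith) (by intro h; linarith) (by linarith)
  have h2 : (L s - L (t + δ)) / (s - (t + δ)) ≤ (L t - L (t + δ)) / (t - (t + δ)) :=
    hconv.secant_mono (hmem _ (by linarith)) (hmem s hs) (hmem t ht)
      (by intro h; linarith) (by intro h; linarith) (by linarith)
  have e1 : (L s - L (t + δ)) / (s - (t + δ)) = (L (t + δ) - L s) / (t + δ - s) := by
    rw [← neg_div_neg_eq]; ring_nf
  have e2 : (L t - L (t + δ)) / (t - (t + δ)) = (L (t + δ) - L t) / δ := by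
    rw [← neg_div_neg_eq]; ring_nf
  rw [e1, e2] at h2
  have e3 : s + δ - s = δ := by ring
  rw [e3] at h1
  have hchain : (L (s + δ) - L s) / δ ≤ (L (t + δ) - L t) / δ := h1.trans h2
  have hsum : L (s + δ) + L t ≤ L s + L (t + δ) := by
    have := (div_le_div_iff_of_pos_right hδ).mp hchain
    linarith
  have hexp := Real.exp_le_exp.mpr hsum
  rw [Real.exp_add, Real.exp_add] at hexp
  simp only [hL, Function.comp_apply] at hexp
  rwa [Real.exp_log (Real.Gamma_pos_of_pos (by linarith)),
    Real.exp_log (Real.Gamma_pos_of_pos ht),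
    Real.exp_log (Real.Gamma_pos_of_pos hs),
    Real.exp_log (Real.Gamma_pos_of_pos (by linarith))] at hexp

/-- Lower bound on the growth of Gamma: `Γ t * (t-1)^α ≤ Γ (t + α)` for `t ≥ 2`. -/
private lemma gamma_ratio_lower {t α : ℝ} (hα : 0 < α) (ht : 2 ≤ t) :
    Real.Gamma t * (t - 1) ^ α ≤ Real.Gamma (t + α) := by
  set L : ℝ → ℝ := Real.log ∘ Real.Gamma with hL
  have hconv := Real.convexOn_log_Gamma
  have ht1 : (0:ℝ) < t - 1 := by linarith
  have hslope : (L t - L (t - 1)) / (t - (t - 1)) ≤ (L (t + α) - L t) / (t + α - t) :=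
    hconv.slope_mono_adjacent (show t - 1 ∈ Set.Ioi (0:ℝ) from ht1)
      (show t + α ∈ Set.Ioi (0:ℝ) from by simp only [Set.mem_Ioi]; linarith)
      (by linarith) (by linarith)
  have hGt : Real.Gamma t = (t - 1) * Real.Gamma (t - 1) := by
    have := Real.Gamma_add_one (s := t - 1) ht1.ne'
    rwa [sub_add_cancel] at this
  have hlog : L t - L (t - 1) = Real.log (t - 1) := by
    simp only [hL, Function.comp_apply, hGt,
      Real.log_mul ht1.ne' (Real.Gamma_pos_of_pos ht1).ne']
    ring
  have e1 : t - (t - 1) = (1:ℝ) := by ring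
  have e2 : t + α - t = α := by ring
  rw [hlog, e1, e2, div_one] at hslope
  have hkey : α * Real.log (t - 1) + L t ≤ L (t + α) := by
    have h := (le_div_iff₀ hα).mp hslope
    linarith
  have hexp := Real.exp_le_exp.mpr hkey
  rw [Real.exp_add] at hexp
  simp only [hL, Function.comp_apply] at hexp
  rw [Real.exp_log (Real.Gamma_pos_of_pos (by linarith : (0:ℝ) < t)),
    Real.exp_log (Real.Gamma_pos_of_pos (by linarith : (0:ℝ) < t + α))] at hexp
  calc Real.Gamma t * (t - 1) ^ α
      = Real.exp (α * Real.log (t - 1)) * Real.Gamma t := by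
        rw [Real.rpow_def_of_pos ht1, mul_comm (Real.log (t-1)) α]; ring
    _ ≤ Real.Gamma (t + α) := hexp

/-- Summability of the Mittag-Leffler series. -/
private lemma summable_ml {α β : ℝ} (hα : 0 < α) (hβ : 0 < β) {x : ℝ} (hx : 0 ≤ x) :
    Summable (fun n : ℕ => x ^ n / Real.Gamma (α * n + β)) := by
  set K : ℝ := max 1 (2 * x) ^ α⁻¹ with hK
  have hK1 : 1 ≤ K := Real.one_le_rpow (le_max_left _ _) (by positivity)
  have htend : Tendsto (fun n : ℕ => α * n + β) atTop atTop := by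
    apply tendsto_atTop_add_const_right
    exact (tendsto_const_mul_atTop_of_pos hα).mpr tendsto_natCast_atTop_atTop
  apply summable_of_ratio_norm_eventually_le (r := 1/2) (by norm_num)
  filter_upwards [htend.eventually_ge_atTop (K + 2)] with n hn
  set t : ℝ := α * n + β with htdef
  have ht2 : 2 ≤ t := by linarith
  have ht0 : (0:ℝ) < t := by linarith
  have ht1 : (0:ℝ) < t - 1 := by linarith
  have hGt : 0 < Real.Gamma t := Real.Gamma_pos_of_pos ht0
  have hGta : 0 < Real.Gamma (t + α) := Real.Gamma_pos_of_pos (by linarith)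
  have h2x : 2 * x ≤ (t - 1) ^ α := by
    have hKt : K ≤ t - 1 := by linarith
    calc 2 * x ≤ max 1 (2*x) := le_max_right _ _
      _ = K ^ α := by
          rw [hK, ← Real.rpow_mul (by positivity), inv_mul_cancel₀ hα.ne', Real.rpow_one]
      _ ≤ (t - 1) ^ α := Real.rpow_le_rpow (by positivity) hKt hα.le
  have harg : α * ((n : ℝ) + 1) + β = t + α := by rw [htdef]; ring
  have hratio := gamma_ratio_lower hα ht2
  have hxn : (0:ℝ) ≤ x ^ n := pow_nonneg hx n
  rw [Real.norm_eq_abs, Real.norm_eq_abs, abs_div, abs_div,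
    abs_of_nonneg (pow_nonneg hx _), abs_of_nonneg (pow_nonneg hx _)]
  push_cast
  rw [harg, abs_of_pos hGta, abs_of_pos hGt]
  have hrhs : (1:ℝ)/2 * (x ^ n / Real.Gamma t) = x ^ n / (2 * Real.Gamma t) := by ring
  rw [hrhs, div_le_div_iff₀ hGta (by positivity), pow_succ]
  have hA : x ^ n * (Real.Gamma t * (t-1)^α) ≤ x ^ n * Real.Gamma (t + α) :=
    mul_le_mul_of_nonneg_left hratio hxn
  have hB : x ^ n * (2 * x * Real.Gamma t) ≤ x ^ n * ((t-1)^α * Real.Gamma t) :=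
    mul_le_mul_of_nonneg_left (mul_le_mul_of_nonneg_right h2x hGt.le) hxn
  nlinarith [hA, hB]

/-- Positivity of the Mittag-Leffler function. -/
private lemma ml_pos {α β : ℝ} (hα : 0 < α) (hβ : 0 < β) {x : ℝ} (hx : 0 ≤ x) :
    0 < mittagLeffler α β x := by
  apply Summable.tsum_pos (summable_ml hα hβ hx) _ 0
  · have : (0:ℝ) < Real.Gamma (α * (0:ℕ) + β) := Real.Gamma_pos_of_pos (by simpa using hβ)
    positivity
  · intro n
    have hΓ : (0:ℝ) < Real.Gamma (α * n + β) := Real.Gamma_pos_of_pos (by positivity)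
    positivity

/-- The key cross-multiplication inequality. -/
private lemma ml_cross {α β β' x y : ℝ} (hα : 0 < α) (hβ : 1 < β) (hβ' : 1 < β')
    (hββ' : β ≤ β') (hx : 0 < x) (hxy : x ≤ y) :
    mittagLeffler α β x * mittagLeffler α β' y ≤
      mittagLeffler α β y * mittagLeffler α β' x := by
  have hy : 0 < y := hx.trans_le hxy
  have hβ0 : (0:ℝ) < β := by linarith
  have hβ'0 : (0:ℝ) < β' := by linarith
  set f : ℝ → ℕ → ℝ := fun c n => c ^ n / Real.Gamma (α * n + β) with hf
  set g : ℝ → ℕ → ℝ := fun c n => c ^ n / Real.Gamma (α * n + β') with hg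
  have hΓβ : ∀ n : ℕ, (0:ℝ) < Real.Gamma (α * n + β) :=
    fun n => Real.Gamma_pos_of_pos (by positivity)
  have hΓβ' : ∀ n : ℕ, (0:ℝ) < Real.Gamma (α * n + β') :=
    fun n => Real.Gamma_pos_of_pos (by positivity)
  have hfnn : ∀ (c : ℝ), 0 ≤ c → ∀ n, 0 ≤ f c n := fun c hc n =>
    div_nonneg (pow_nonneg hc n) (hΓβ n).le
  have hgnn : ∀ (c : ℝ), 0 ≤ c → ∀ n, 0 ≤ g c n := fun c hc n =>
    div_nonneg (pow_nonneg hc n) (hΓβ' n).le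
  have Sfx : Summable (f x) := summable_ml hα hβ0 hx.le
  have Sfy : Summable (f y) := summable_ml hα hβ0 hy.le
  have Sgx : Summable (g x) := summable_ml hα hβ'0 hx.le
  have Sgy : Summable (g y) := summable_ml hα hβ'0 hy.le
  have SF : Summable (fun p : ℕ × ℕ => f x p.1 * g y p.2) :=
    Sfx.mul_of_nonneg Sgy (hfnn x hx.le) (hgnn y hy.le)
  have SG : Summable (fun p : ℕ × ℕ => f y p.1 * g x p.2) :=
    Sfy.mul_of_nonneg Sgx (hfnn y hy.le) (hgnn x hx.le)
  have hprod : ∀ (u v : ℝ), Summable (f u) → Summable (g v) →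
      Summable (fun p : ℕ × ℕ => f u p.1 * g v p.2) →
      mittagLeffler α β u * mittagLeffler α β' v = ∑' p : ℕ × ℕ, f u p.1 * g v p.2 := by
    intro u v hu hv huv
    exact Summable.tsum_mul_tsum hu hv huv
  rw [hprod x y Sfx Sgy SF, hprod y x Sfy Sgx SG, ← sub_nonneg, ← Summable.tsum_sub SG SF]
  set c : ℕ × ℕ → ℝ := fun p => f y p.1 * g x p.2 - f x p.1 * g y p.2 with hc
  have Sc : Summable c := SG.sub SF
  have Scs : Summable (fun p : ℕ × ℕ => c p.swap) :=
    ((Equiv.prodComm ℕ ℕ).summable_iff (f := c)).mpr Sc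
  have hswap : ∑' p : ℕ × ℕ, c p.swap = ∑' p, c p := (Equiv.prodComm ℕ ℕ).tsum_eq c
  -- termwise nonnegativity of the symmetrization
  have hterm : ∀ k m : ℕ, m ≤ k → 0 ≤ c (k, m) + c (m, k) := by
    intro k m hmk
    have hpow : x ^ k * y ^ m ≤ y ^ k * x ^ m := by
      obtain ⟨d, rfl⟩ := Nat.exists_eq_add_of_le hmk
      rw [pow_add, pow_add]
      have : x ^ d ≤ y ^ d := pow_le_pow_left₀ hx.le hxy d
      have h1 : (0:ℝ) ≤ x ^ m * y ^ m := by positivity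
      calc x ^ m * x ^ d * y ^ m = (x ^ m * y ^ m) * x ^ d := by ring
        _ ≤ (x ^ m * y ^ m) * y ^ d := mul_le_mul_of_nonneg_left this h1
        _ = y ^ m * y ^ d * x ^ m := by ring
    have hgam : Real.Gamma (α * m + β') * Real.Gamma (α * k + β) ≤
        Real.Gamma (α * m + β) * Real.Gamma (α * k + β') := by
      have hst : α * m + β ≤ α * k + β := by
        have : (m:ℝ) ≤ k := Nat.cast_le.mpr hmk
        nlinarith
      have := gamma_four_point (s := α * m + β) (t := α * k + β) (δ := β' - β)
        (by positivity) hst (by linarith)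
      rw [show α * m + β + (β' - β) = α * m + β' by ring,
        show α * k + β + (β' - β) = α * k + β' by ring] at this
      exact this
    have hA := hΓβ k; have hB := hΓβ' m; have hA' := hΓβ m; have hB' := hΓβ' k
    have hkey : c (k, m) + c (m, k) =
        (y ^ k * x ^ m - x ^ k * y ^ m) *
          (Real.Gamma (α * m + β) * Real.Gamma (α * k + β') -
            Real.Gamma (α * m + β') * Real.Gamma (α * k + β)) /
          (Real.Gamma (α * k + β) * Real.Gamma (α * m + β') *
            (Real.Gamma (α * m + β) * Real.Gamma (α * k + β'))) := by
      simp only [hc, hf, hg]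
      field_simp
      ring
    rw [hkey]
    apply div_nonneg _ (by positivity)
    exact mul_nonneg (by linarith) (by linarith)
  have hnn : ∀ p : ℕ × ℕ, 0 ≤ c p + c p.swap := by
    rintro ⟨k, m⟩
    rcases le_total m k with h | h
    · exact hterm k m h
    · have := hterm m k h
      simpa [add_comm] using this
  have h2 : 0 ≤ ∑' p : ℕ × ℕ, (c p + c p.swap) := tsum_nonneg hnn
  rw [Summable.tsum_add Sc Scs, hswap] at h2
  linarith

/-- Monotonicity of ratios of Mittag-Leffler functions in the second parameter. -/
theorem mittagLeffler_ratio_monotone (α β₁ β₂ : ℝ) (hα : 0 < α)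
    (hβ₁ : 1 < β₁) (hβ₂ : 1 < β₂) :
    (β₁ < β₂ → MonotoneOn (fun z : ℝ => mittagLeffler α β₁ z / mittagLeffler α β₂ z)
      (Set.Ioi 0)) ∧
    (β₂ < β₁ → AntitoneOn (fun z : ℝ => mittagLeffler α β₁ z / mittagLeffler α β₂ z)
      (Set.Ioi 0)) := by
  constructor
  · intro hlt x hx y hy hxy
    simp only [Set.mem_Ioi] at hx hy
    have h1 : 0 < mittagLeffler α β₂ x := ml_pos hα (by linarith) hx.le
    have h2 : 0 < mittagLeffler α β₂ y := ml_pos hα (by linarith) hy.le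
    rw [div_le_div_iff₀ h1 h2]
    have := ml_cross hα hβ₁ hβ₂ hlt.le hx hxy
    linarith
  · intro hlt x hx y hy hxy
    simp only [Set.mem_Ioi] at hx hy
    have h1 : 0 < mittagLeffler α β₂ x := ml_pos hα (by linarith) hx.le
    have h2 : 0 < mittagLeffler α β₂ y := ml_pos hα (by linarith) hy.le
    rw [div_le_div_iff₀ h2 h1]
    have := ml_cross hα hβ₂ hβ₁ hlt.le hx hxy
    linarith
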